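/- For every k ≥ 1, the silver stepsize schedule satisfies Σ_{i=0}^{2^k−2} π^(k)_i = ρ^k − 1 and Π_{i=0}^{2^k−2} (π^(k)_i − 1)² = ρ^(−2k). -/

import Mathlib

open Finset

/-- The silver ratio ρ = 1 + √2. -/
noncomputable def rho : ℝ := 1 + Real.sqrt 2

/-- Entry `i` of the silver stepsize schedule π^(k) ∈ ℝ^(2^k − 1) (0-indexed):
π^(1) = [√2], π^(k+1) = [π^(k), β_k, π^(k)] where β_k = 1 + ρ^(k−1). -/
noncomputable def piSilver : ℕ → ℕ → ℝ
  | 0, _ => 0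
  | 1, _ => Real.sqrt 2
  | k + 2, i =>
      if i < 2 ^ (k + 1) - 1 then piSilver (k + 1) i
      else if i = 2 ^ (k + 1) - 1 then 1 + rho ^ k
      else piSilver (k + 1) (i - 2 ^ (k + 1))

/-- The sequence r_k: r_1 = 4, r_{k+1} = (r_k + 4ρ^k + √(r_k(r_k + 8ρ^k)))/2. -/
noncomputable def rseq : ℕ → ℝ
  | 0 => 0
  | 1 => 4
  | k + 2 =>
      (rseq (k + 1) + 4 * rho ^ (k + 1)
        + Real.sqrt (rseq (k + 1) * (rseq (k + 1) + 8 * rho ^ (k + 1)))) / 2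

/-- α_k = 1 + (√(r_k(r_k + 8ρ^k)) − r_k)/4. -/
noncomputable def alphaSeq (k : ℕ) : ℝ :=
  1 + (Real.sqrt (rseq k * (rseq k + 8 * rho ^ k)) - rseq k) / 4

/-- Entry `i` of h_right^(k) ∈ ℝ^(2^k − 1) (0-indexed):
h_right^(1) = [3/2], h_right^(k+1) = [π^(k), α_k, h_right^(k)]. -/
noncomputable def hright : ℕ → ℕ → ℝ
  | 0, _ => 0
  | 1, _ => 3 / 2
  | k + 2, i =>
      if i < 2 ^ (k + 1) - 1 then piSilver (k + 1) i
      else if i = 2 ^ (k + 1) - 1 then alphaSeq (k + 1)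
      else hright (k + 1) (i - 2 ^ (k + 1))

/-- h_left^(k) is h_right^(k) with its entries reversed. -/
noncomputable def hleft (k i : ℕ) : ℝ := hright k (2 ^ k - 2 - i)

lemma sqrt2_sq : Real.sqrt 2 ^ 2 = 2 := Real.sq_sqrt (by norm_num)

lemma rho_pos : 0 < rho := by
  have := Real.sqrt_nonneg 2; unfold rho; linarith

lemma rho_ne : rho ≠ 0 := ne_of_gt rho_pos

lemma rho_sq : rho ^ 2 = 2 * rho + 1 := by
  have := sqrt2_sq
  unfold rho; nlinarith

lemma rho_zpow (n : ℕ) : rho ^ (-(2 * (n : ℤ))) = (rho ^ (2 * n) : ℝ)⁻¹ := by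
  rw [zpow_neg]; norm_cast

theorem silver_sum_and_product (k : ℕ) (hk : 1 ≤ k) :
    (∑ i ∈ Finset.range (2 ^ k - 1), piSilver k i = rho ^ k - 1) ∧
    (∏ i ∈ Finset.range (2 ^ k - 1), (piSilver k i - 1) ^ 2 = rho ^ (-(2 * (k : ℤ)))) := by
  induction k with
  | zero => omega
  | succ n ih =>
    rcases Nat.eq_or_lt_of_le hk with h1 | h2
    · -- n + 1 = 1
      have : n = 0 := by omega
      subst this
      constructor
      · simp [piSilver, rho]
      · have hr : 2 ^ (0 + 1) - 1 = 1 := by norm_num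
        rw [hr, Finset.prod_range_one, rho_zpow 1]
        have h2 := sqrt2_sq
        have : rho ^ (2 * 1) = 3 + 2 * Real.sqrt 2 := by unfold rho; norm_num; nlinarith
        rw [this, piSilver]
        have hs : Real.sqrt 2 ≥ 0 := Real.sqrt_nonneg 2
        field_simp
        nlinarith
    · -- n ≥ 1
      have hn : 1 ≤ n := by omega
      obtain ⟨ihs, ihp⟩ := ih hn
      obtain ⟨m, rfl⟩ : ∃ m, n = m + 1 := ⟨n - 1, by omega⟩
      set N := 2 ^ (m + 1) with hN
      have hN1 : 1 ≤ N := Nat.one_le_two_pow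
      have hsplit : 2 ^ (m + 2) - 1 = (N - 1) + 1 + (N - 1) := by
        have : 2 ^ (m + 2) = 2 * N := by rw [hN]; ring
        omega
      have hmid : piSilver (m + 2) (N - 1) = 1 + rho ^ m := by
        rw [piSilver]
        simp [hN]
      have hleft' : ∀ i ∈ Finset.range (N - 1), piSilver (m + 2) i = piSilver (m + 1) i := by
        intro i hi
        rw [Finset.mem_range] at hi
        rw [piSilver]
        rw [if_pos (show i < 2 ^ (m + 1) - 1 from hi)]
      have hright' : ∀ i ∈ Finset.range (N - 1),
          piSilver (m + 2) ((N - 1) + 1 + i) = piSilver (m + 1) i := by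
        intro i hi
        rw [Finset.mem_range] at hi
        rw [piSilver]
        have h1 : ¬ ((N - 1) + 1 + i < 2 ^ (m + 1) - 1) := by omega
        have h2 : ¬ ((N - 1) + 1 + i = 2 ^ (m + 1) - 1) := by omega
        have h3 : (N - 1) + 1 + i - 2 ^ (m + 1) = i := by omega
        rw [if_neg h1, if_neg h2, h3]
      constructor
      · rw [hsplit, Finset.sum_range_add, Finset.sum_range_succ,
          Finset.sum_congr rfl hleft', Finset.sum_congr rfl hright', hmid, ihs]
        have := rho_sq
        have h4 : rho ^ (m + 2) = rho ^ m * rho ^ 2 := by ring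
        rw [h4, this]; ring
      · have hleft2 : ∀ i ∈ Finset.range (N - 1),
            (piSilver (m + 2) i - 1) ^ 2 = (piSilver (m + 1) i - 1) ^ 2 := by
          intro i hi; rw [hleft' i hi]
        have hright2 : ∀ i ∈ Finset.range (N - 1),
            (piSilver (m + 2) ((N - 1) + 1 + i) - 1) ^ 2 = (piSilver (m + 1) i - 1) ^ 2 := by
          intro i hi; rw [hright' i hi]
        rw [hsplit, Finset.prod_range_add, Finset.prod_range_succ,
          Finset.prod_congr rfl hleft2, Finset.prod_congr rfl hright2, hmid, ihp]
        rw [rho_zpow, rho_zpow]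
        have hne : rho ^ (2 * (m + 1)) ≠ 0 := pow_ne_zero _ rho_ne
        have hne2 : rho ^ (2 * (m + 2)) ≠ 0 := pow_ne_zero _ rho_ne
        field_simp
        ring
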